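/- arXiv:2406.01417 — 3 statements merged into one kernel-verified Lean document; each statement's English description precedes it below -/
import Mathlib

section
/- Let g : P × Λ → E be square-integrable with respect to μ ⊗ ν, with overall mean ḡ and conditional mean ḡ₂(λ) = ∫ g(p,λ) dμ(p). Let p and p' be two independent samples from μ and let λ₁,…,λ_K be i.i.d. samples from ν, independent of p and p'. Define the centered K-averages P = (1/K) Σ_{k=1}^K g(p, λ_k) − ḡ and P' = (1/K) Σ_{k=1}^K g(p', λ_k) − ḡ (note the same λ_k's appear in both). Then the cross-correlation satisfies E[ ⟨P, P'⟩ ] = (1/K) ∫_Λ ‖ḡ₂(λ) − ḡ‖² dν(λ). -/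
open MeasureTheory
open scoped RealInnerProductSpace

section Aux

variable {α β Λ E : Type*} [MeasurableSpace α] [MeasurableSpace β] [MeasurableSpace Λ]
  [NormedAddCommGroup E] [InnerProductSpace ℝ E]

/-- Inner product of two L² functions is integrable. -/
lemma aux_integrable_inner {μ : Measure α} {F G : α → E}
    (hF : MemLp F 2 μ) (hG : MemLp G 2 μ) :
    Integrable (fun x => ⟪F x, G x⟫) μ := by
  have hF2 : Integrable (fun x => ‖F x‖ ^ 2) μ := (memLp_two_iff_integrable_sq_norm hF.1).mp hF
  have hG2 : Integrable (fun x => ‖G x‖ ^ 2) μ := (memLp_two_iff_integrable_sq_norm hG.1).mp hG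
  refine Integrable.mono' ((hF2.add hG2).div_const 2) (hF.1.inner hG.1)
    (Filter.Eventually.of_forall fun x => ?_)
  have h1 : ‖(⟪F x, G x⟫)‖ ≤ ‖F x‖ * ‖G x‖ := by
    rw [Real.norm_eq_abs]; exact abs_real_inner_le_norm _ _
  have h2 := two_mul_le_add_sq ‖F x‖ ‖G x‖
  have : (0:ℝ) < 2 := by norm_num
  calc ‖(⟪F x, G x⟫)‖ ≤ ‖F x‖ * ‖G x‖ := h1
    _ ≤ (‖F x‖ ^ 2 + ‖G x‖ ^ 2) / 2 := by nlinarith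
    _ = (fun x => (‖F x‖ ^ 2 + ‖G x‖ ^ 2) / 2) x := rfl

/-- Fubini for the inner product of two functions of independent variables. -/
lemma aux_integral_inner_prod [CompleteSpace E] (μ : Measure α) (ν : Measure β)
    [SFinite μ] [SFinite ν] {F : α → E} {G : β → E}
    (hF : Integrable F μ) (hG : Integrable G ν) :
    ∫ z : α × β, ⟪F z.1, G z.2⟫ ∂(μ.prod ν) = ⟪∫ x, F x ∂μ, ∫ y, G y ∂ν⟫ := by
  have hint : Integrable (fun z : α × β => ⟪F z.1, G z.2⟫) (μ.prod ν) := by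
    refine (hF.norm.mul_prod hG.norm).mono' (hF.1.comp_fst.inner hG.1.comp_snd)
      (Filter.Eventually.of_forall fun z => ?_)
    rw [Real.norm_eq_abs]; exact abs_real_inner_le_norm _ _
  rw [MeasureTheory.integral_prod _ hint]
  have h1 : ∀ x, ∫ y, ⟪F x, G y⟫ ∂ν = ⟪F x, ∫ y, G y ∂ν⟫ := fun x => integral_inner hG (F x)
  simp_rw [h1]
  have h2 : ∫ x, ⟪F x, ∫ y, G y ∂ν⟫ ∂μ = ∫ x, ⟪(∫ y, G y ∂ν), F x⟫ ∂μ :=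
    integral_congr_ae (Filter.Eventually.of_forall fun x => real_inner_comm _ _)
  rw [h2, integral_inner hF, real_inner_comm]

/-- The `k`-th coordinate of a `Measure.pi` of probability measures is distributed
according to the factor. -/
lemma aux_map_eval (ν : Measure Λ) [IsProbabilityMeasure ν] {K : ℕ} (k : Fin K) :
    Measure.map (fun l : Fin K → Λ => l k) (Measure.pi fun _ : Fin K => ν) = ν := by
  ext s hs
  rw [Measure.map_apply (measurable_pi_apply k) hs]
  have hset : (fun l : Fin K → Λ => l k) ⁻¹' s
      = Set.pi Set.univ (fun i => if i = k then s else Set.univ) := by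
    ext l
    simp only [Set.mem_preimage, Set.mem_pi, Set.mem_univ, true_implies]
    constructor
    · intro hmem i; split
      · next hik => subst hik; exact hmem
      · trivial
    · intro hall; have := hall k; simpa using this
  rw [hset, Measure.pi_pi]
  have : ∀ i : Fin K, ν (if i = k then s else Set.univ) = if i = k then ν s else 1 := by
    intro i; split <;> simp
  simp_rw [this]
  simp [Finset.prod_ite_eq']

/-- Two distinct coordinates of a `Measure.pi` of i.i.d. probability measures are
independent, i.e. jointly distributed according to the product measure. -/
lemma aux_map_eval_pair (ν : Measure Λ) [IsProbabilityMeasure ν] {K : ℕ} {k j : Fin K}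
    (hkj : k ≠ j) :
    Measure.map (fun l : Fin K → Λ => (l k, l j)) (Measure.pi fun _ : Fin K => ν)
      = ν.prod ν := by
  refine (Measure.prod_eq fun s t hs ht => ?_).symm
  rw [Measure.map_apply ((measurable_pi_apply k).prodMk (measurable_pi_apply j)) (hs.prod ht)]
  have hset : (fun l : Fin K → Λ => (l k, l j)) ⁻¹' (s ×ˢ t)
      = Set.pi Set.univ (fun i => if i = k then s else if i = j then t else Set.univ) := by
    ext l
    simp only [Set.mem_preimage, Set.mem_prod, Set.mem_pi, Set.mem_univ, true_implies]
    constructor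
    · rintro ⟨h1, h2⟩ i
      split
      · next hik => subst hik; exact h1
      · split
        · next hij => subst hij; exact h2
        · trivial
    · intro hall
      refine ⟨by simpa using hall k, ?_⟩
      have := hall j
      rw [if_neg (by exact fun hjk => hkj hjk.symm), if_pos rfl] at this
      exact this
  rw [hset, Measure.pi_pi]
  have hval : ∀ i : Fin K, ν (if i = k then s else if i = j then t else Set.univ)
      = if i = k then ν s else if i = j then ν t else 1 := by
    intro i; split
    · rfl
    · split
      · rfl
      · simp
  simp_rw [hval]
  rw [← Finset.mul_prod_erase Finset.univ _ (Finset.mem_univ k)]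
  rw [← Finset.mul_prod_erase (Finset.univ.erase k) _
    (Finset.mem_erase.mpr ⟨fun hjk => hkj hjk.symm, Finset.mem_univ j⟩)]
  rw [if_pos rfl, if_neg (by exact fun hjk => hkj hjk.symm), if_pos rfl]
  rw [Finset.prod_eq_one, mul_one]
  intro i hi
  simp only [Finset.mem_erase] at hi
  rw [if_neg hi.2.1, if_neg hi.1]

end Aux

/-- **Off-diagonal cross term in the multi-mix variance.** For two independent sample
pairs `p, p' ∼ μ` and `K` i.i.d. mixing weights `λ₁,…,λ_K ∼ ν` independent of `p, p'`
and shared between the two centered `K`-averages, the expected inner product of the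
centered averages equals `(1/K) V_λ` with `V_λ = ∫ ‖ḡ₂(λ) − ḡ‖² dν`. -/
theorem multi_mix_cross_term
    {P Λ E : Type*} [MeasurableSpace P] [MeasurableSpace Λ]
    [NormedAddCommGroup E] [InnerProductSpace ℝ E] [FiniteDimensional ℝ E]
    (μ : Measure P) (ν : Measure Λ) [IsProbabilityMeasure μ] [IsProbabilityMeasure ν]
    (g : P × Λ → E) (hg : MemLp g 2 (μ.prod ν))
    (gbar : E) (hgbar : gbar = ∫ x, g x ∂(μ.prod ν))
    (g2 : Λ → E) (hg2 : ∀ l, g2 l = ∫ p, g (p, l) ∂μ)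
    (Vl : ℝ) (hVl : Vl = ∫ l, ‖g2 l - gbar‖ ^ 2 ∂ν)
    (K : ℕ) (hK : 1 ≤ K) :
    ∫ x : (P × P) × (Fin K → Λ),
        ⟪((K : ℝ)⁻¹ • (∑ k : Fin K, g (x.1.1, x.2 k)) - gbar),
          ((K : ℝ)⁻¹ • (∑ k : Fin K, g (x.1.2, x.2 k)) - gbar)⟫
        ∂((μ.prod μ).prod (Measure.pi fun _ : Fin K => ν))
      = (K : ℝ)⁻¹ * Vl := by
  have hK0 : (K : ℝ) ≠ 0 := Nat.cast_ne_zero.mpr (by omega)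
  set π : Measure (Fin K → Λ) := Measure.pi fun _ : Fin K => ν with hπ
  haveI : IsProbabilityMeasure π := by rw [hπ]; infer_instance
  set M : Measure ((P × P) × (Fin K → Λ)) := (μ.prod μ).prod π with hM
  haveI : IsProbabilityMeasure M := by rw [hM]; infer_instance
  -- centered function
  set hc : P × Λ → E := fun x => g x - gbar with hhc
  have hhmem : MemLp hc 2 (μ.prod ν) := hg.sub (memLp_const gbar)
  have hgi : Integrable g (μ.prod ν) := hg.integrable one_le_two
  have hhi : Integrable hc (μ.prod ν) := hgi.sub (integrable_const gbar)
  -- centered conditional mean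
  set f : Λ → E := fun l => g2 l - gbar with hf
  have hg2int : Integrable g2 ν := by
    have := hgi.integral_prod_right
    refine this.congr ?_
    exact Filter.Eventually.of_forall fun l => (hg2 l).symm
  have hfint : Integrable f ν := hg2int.sub (integrable_const gbar)
  have hf0 : ∫ l, f l ∂ν = 0 := by
    rw [hf]
    rw [integral_sub hg2int (integrable_const gbar), integral_const, probReal_univ]
    simp only [one_smul]
    have : ∫ l, g2 l ∂ν = ∫ z, g z ∂(μ.prod ν) := by
      rw [MeasureTheory.integral_prod_symm _ hgi]
      exact integral_congr_ae (Filter.Eventually.of_forall fun l => hg2 l)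
    rw [this, ← hgbar, sub_self]
  -- a.e. section properties
  have hsec : ∀ᵐ l ∂ν, Integrable (fun p => hc (p, l)) μ ∧ ∫ p, hc (p, l) ∂μ = f l := by
    filter_upwards [hgi.prod_left_ae] with l hl
    have hint : Integrable (fun p => hc (p, l)) μ := hl.sub (integrable_const gbar)
    refine ⟨hint, ?_⟩
    rw [hhc]
    simp only
    rw [integral_sub hl (integrable_const gbar), integral_const, probReal_univ,
      one_smul,
      hf, ← hg2 l]
  -- measure preserving projections
  have mp1 : ∀ k : Fin K, MeasurePreserving
      (fun x : (P × P) × (Fin K → Λ) => (x.1.1, x.2 k)) M (μ.prod ν) := by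
    intro k
    have e1 : MeasurePreserving (Prod.fst : P × P → P) (μ.prod μ) μ :=
      ⟨measurable_fst, by simp⟩
    have e2 : MeasurePreserving (fun l : Fin K → Λ => l k) π ν :=
      ⟨measurable_pi_apply k, aux_map_eval ν k⟩
    exact e1.prod e2
  have mp2 : ∀ k : Fin K, MeasurePreserving
      (fun x : (P × P) × (Fin K → Λ) => (x.1.2, x.2 k)) M (μ.prod ν) := by
    intro k
    have e1 : MeasurePreserving (Prod.snd : P × P → P) (μ.prod μ) μ :=
      ⟨measurable_snd, by simp⟩
    have e2 : MeasurePreserving (fun l : Fin K → Λ => l k) π ν :=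
      ⟨measurable_pi_apply k, aux_map_eval ν k⟩
    exact e1.prod e2
  have hmem1 : ∀ k : Fin K,
      MemLp (fun x : (P × P) × (Fin K → Λ) => hc (x.1.1, x.2 k)) 2 M :=
    fun k => hhmem.comp_measurePreserving (mp1 k)
  have hmem2 : ∀ k : Fin K,
      MemLp (fun x : (P × P) × (Fin K → Λ) => hc (x.1.2, x.2 k)) 2 M :=
    fun k => hhmem.comp_measurePreserving (mp2 k)
  have hFint : ∀ k j : Fin K,
      Integrable (fun x : (P × P) × (Fin K → Λ) => ⟪hc (x.1.1, x.2 k), hc (x.1.2, x.2 j)⟫) M :=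
    fun k j => aux_integrable_inner (hmem1 k) (hmem2 j)
  -- value of each cross term
  have hT : ∀ k j : Fin K,
      ∫ x : (P × P) × (Fin K → Λ), ⟪hc (x.1.1, x.2 k), hc (x.1.2, x.2 j)⟫ ∂M
        = ∫ lam : Fin K → Λ, ⟪f (lam k), f (lam j)⟫ ∂π := by
    intro k j
    rw [hM, MeasureTheory.integral_prod_symm _ (hFint k j)]
    refine integral_congr_ae ?_
    have haek : ∀ᵐ lam : Fin K → Λ ∂π,
        Integrable (fun p => hc (p, lam k)) μ ∧ ∫ p, hc (p, lam k) ∂μ = f (lam k) := by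
      refine ae_of_ae_map (f := fun l : Fin K → Λ => l k)
        (p := fun l : Λ => Integrable (fun p => hc (p, l)) μ ∧ ∫ p, hc (p, l) ∂μ = f l)
        (measurable_pi_apply k).aemeasurable ?_
      rw [aux_map_eval ν k]; exact hsec
    have haej : ∀ᵐ lam : Fin K → Λ ∂π,
        Integrable (fun p => hc (p, lam j)) μ ∧ ∫ p, hc (p, lam j) ∂μ = f (lam j) := by
      refine ae_of_ae_map (f := fun l : Fin K → Λ => l j)
        (p := fun l : Λ => Integrable (fun p => hc (p, l)) μ ∧ ∫ p, hc (p, l) ∂μ = f l)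
        (measurable_pi_apply j).aemeasurable ?_
      rw [aux_map_eval ν j]; exact hsec
    filter_upwards [haek, haej] with lam hk' hj'
    have := aux_integral_inner_prod μ μ hk'.1 hj'.1
    simpa [hk'.2, hj'.2] using this
  -- the value: Vl on the diagonal, 0 off the diagonal
  have hfaesm : AEStronglyMeasurable f ν := hfint.1
  have hTval : ∀ k j : Fin K,
      ∫ x : (P × P) × (Fin K → Λ), ⟪hc (x.1.1, x.2 k), hc (x.1.2, x.2 j)⟫ ∂M
        = if k = j then Vl else 0 := by
    intro k j
    rw [hT k j]
    by_cases hkj : k = j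
    · subst hkj
      rw [if_pos rfl]
      have : ∫ lam : Fin K → Λ, ⟪f (lam k), f (lam k)⟫ ∂π
          = ∫ lam : Fin K → Λ, ‖f (lam k)‖ ^ 2 ∂π :=
        integral_congr_ae (Filter.Eventually.of_forall fun lam =>
          real_inner_self_eq_norm_sq _)
      rw [this]
      have hmeas : AEStronglyMeasurable (fun l => ‖f l‖ ^ 2)
          (Measure.map (fun l : Fin K → Λ => l k) π) := by
        rw [hπ, aux_map_eval ν k]
        exact (hfaesm.norm.pow 2)
      have hmap := MeasureTheory.integral_map (φ := fun l : Fin K → Λ => l k)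
        (f := fun l : Λ => ‖f l‖ ^ 2) (μ := π) (measurable_pi_apply k).aemeasurable hmeas
      rw [hπ, aux_map_eval ν k] at hmap
      rw [hπ, ← hmap, hVl]

    · rw [if_neg hkj]
      have hmeas : AEStronglyMeasurable (fun z : Λ × Λ => ⟪f z.1, f z.2⟫) (ν.prod ν) :=
        hfaesm.comp_fst.inner hfaesm.comp_snd
      have hmap := aux_map_eval_pair (K := K) ν hkj
      have : ∫ lam : Fin K → Λ, ⟪f (lam k), f (lam j)⟫ ∂π
          = ∫ z : Λ × Λ, ⟪f z.1, f z.2⟫ ∂(ν.prod ν) := by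
        have hi := MeasureTheory.integral_map (φ := fun l : Fin K → Λ => (l k, l j))
          (f := fun z : Λ × Λ => ⟪f z.1, f z.2⟫) (μ := π)
          ((measurable_pi_apply k).prodMk (measurable_pi_apply j)).aemeasurable
          (by rw [hπ, hmap]; exact hmeas)
        rw [hπ, hmap] at hi
        rw [hπ, ← hi]
      rw [this, aux_integral_inner_prod ν ν hfint hfint, hf0, inner_zero_left]
  -- pointwise expansion of the integrand
  have hpt : ∀ (p : P) (lam : Fin K → Λ),
      (K : ℝ)⁻¹ • (∑ k : Fin K, g (p, lam k)) - gbar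
        = (K : ℝ)⁻¹ • ∑ k : Fin K, hc (p, lam k) := by
    intro p lam
    have hsum : (∑ k : Fin K, hc (p, lam k))
        = (∑ k : Fin K, g (p, lam k)) - (K : ℝ) • gbar := by
      rw [hhc]
      simp only
      rw [Finset.sum_sub_distrib, Finset.sum_const, Finset.card_univ, Fintype.card_fin,
        ← Nat.cast_smul_eq_nsmul ℝ]
    rw [hsum, smul_sub, smul_smul, inv_mul_cancel₀ hK0, one_smul]
  have hexp : ∀ x : (P × P) × (Fin K → Λ),
      ⟪((K : ℝ)⁻¹ • (∑ k : Fin K, g (x.1.1, x.2 k)) - gbar),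
        ((K : ℝ)⁻¹ • (∑ k : Fin K, g (x.1.2, x.2 k)) - gbar)⟫
        = (K : ℝ)⁻¹ * ((K : ℝ)⁻¹ *
            ∑ k : Fin K, ∑ j : Fin K, ⟪hc (x.1.1, x.2 k), hc (x.1.2, x.2 j)⟫) := by
    intro x
    rw [hpt x.1.1 x.2, hpt x.1.2 x.2, real_inner_smul_left, real_inner_smul_right]
    congr 2
    rw [sum_inner]
    exact Finset.sum_congr rfl fun k _ => inner_sum _ _ _
  calc ∫ x : (P × P) × (Fin K → Λ),
        ⟪((K : ℝ)⁻¹ • (∑ k : Fin K, g (x.1.1, x.2 k)) - gbar),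
          ((K : ℝ)⁻¹ • (∑ k : Fin K, g (x.1.2, x.2 k)) - gbar)⟫ ∂M
      = ∫ x : (P × P) × (Fin K → Λ), (K : ℝ)⁻¹ * ((K : ℝ)⁻¹ *
            ∑ k : Fin K, ∑ j : Fin K, ⟪hc (x.1.1, x.2 k), hc (x.1.2, x.2 j)⟫) ∂M :=
        integral_congr_ae (Filter.Eventually.of_forall hexp)
    _ = (K : ℝ)⁻¹ * ((K : ℝ)⁻¹ * ∑ k : Fin K, ∑ j : Fin K,
          ∫ x : (P × P) × (Fin K → Λ), ⟪hc (x.1.1, x.2 k), hc (x.1.2, x.2 j)⟫ ∂M) := by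
        rw [integral_const_mul, integral_const_mul]
        congr 2
        rw [integral_finset_sum _ (fun k _ => integrable_finset_sum _ fun j _ => hFint k j)]
        exact Finset.sum_congr rfl fun k _ =>
          integral_finset_sum _ fun j _ => hFint k j
    _ = (K : ℝ)⁻¹ * ((K : ℝ)⁻¹ * ∑ k : Fin K, ∑ j : Fin K, if k = j then Vl else 0) := by
        congr 2
        exact Finset.sum_congr rfl fun k _ => Finset.sum_congr rfl fun j _ => hTval k j
    _ = (K : ℝ)⁻¹ * Vl := by
        have : ∀ k : Fin K, (∑ j : Fin K, if k = j then Vl else 0) = Vl := by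
          intro k; simp [Finset.sum_ite_eq]
        simp_rw [this, Finset.sum_const, Finset.card_univ, Fintype.card_fin, nsmul_eq_mul]
        field_simp
end

section
/- Let g : P × Λ → E be square-integrable with respect to μ ⊗ ν, with overall mean ḡ and conditional means ḡ₁(p) = ∫ g(p,λ) dν(λ) and ḡ₂(λ) = ∫ g(p,λ) dμ(p). Let g̃ = (1/(KB)) Σ_{i=1}^B Σ_{k=1}^K g(p_i, λ_k), where p₁,…,p_B are i.i.d. with law μ, λ₁,…,λ_K are i.i.d. with law ν, all mutually independent, and the same λ_k's are shared across all p_i. Then Var[g̃] := E‖g̃ − ḡ‖² satisfies the exact formula Var[g̃] = (1/K) ( (1/B) Var[g] + ((B−1)/B) V_λ ) + (1 − 1/K) · (1/B) V_x, where Var[g] = ∫ ‖g − ḡ‖² d(μ⊗ν), V_x = ∫_P ‖ḡ₁(p) − ḡ‖² dμ(p), and V_λ = ∫_Λ ‖ḡ₂(λ) − ḡ‖² dν(λ). -/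
open MeasureTheory
open scoped RealInnerProductSpace

section helpers

variable {α β E : Type*} [MeasurableSpace α] [MeasurableSpace β]
  [NormedAddCommGroup E] [InnerProductSpace ℝ E] [CompleteSpace E]

lemma mmix_integrable_inner {μ : Measure α} {f g : α → E}
    (hf : MemLp f 2 μ) (hg : MemLp g 2 μ) :
    Integrable (fun x => ⟪f x, g x⟫) μ := by
  have h := L2.integrable_inner (𝕜 := ℝ) (hf.toLp f) (hg.toLp g)
  refine h.congr ?_
  filter_upwards [hf.coeFn_toLp, hg.coeFn_toLp] with x h1 h2
  simp [h1, h2]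

lemma mmix_integral_inner_right {μ : Measure α} {f : α → E} (hf : Integrable f μ) (c : E) :
    ∫ x, ⟪c, f x⟫ ∂μ = ⟪c, ∫ x, f x ∂μ⟫ := by
  simpa using (innerSL ℝ c).integral_comp_comm hf

lemma mmix_integral_inner_left {μ : Measure α} {f : α → E} (hf : Integrable f μ) (c : E) :
    ∫ x, ⟪f x, c⟫ ∂μ = ⟪∫ x, f x ∂μ, c⟫ := by
  rw [show (fun x => ⟪f x, c⟫) = fun x => ⟪c, f x⟫ from funext fun x => real_inner_comm _ _,
    mmix_integral_inner_right hf c, real_inner_comm]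

lemma mmix_prod_inner (μ : Measure α) (ν : Measure β)
    [IsProbabilityMeasure μ] [IsProbabilityMeasure ν]
    {f : α → E} {g : β → E} (hf : Integrable f μ) (hg : Integrable g ν) :
    ∫ z : α × β, ⟪f z.1, g z.2⟫ ∂(μ.prod ν) = ⟪∫ x, f x ∂μ, ∫ y, g y ∂ν⟫ := by
  have hint : Integrable (fun z : α × β => ⟪f z.1, g z.2⟫) (μ.prod ν) := by
    have hmul : Integrable (fun z : α × β => ‖f z.1‖ * ‖g z.2‖) (μ.prod ν) :=
      hf.norm.mul_prod hg.norm
    refine hmul.mono' ?_ ?_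
    · exact (hf.1.comp_quasiMeasurePreserving Measure.quasiMeasurePreserving_fst).inner
        (hg.1.comp_quasiMeasurePreserving Measure.quasiMeasurePreserving_snd)
    · refine Filter.Eventually.of_forall fun z => ?_
      simpa using abs_real_inner_le_norm (f z.1) (g z.2)
  rw [integral_prod _ hint]
  have : ∀ x, ∫ y, ⟪f x, g y⟫ ∂ν = ⟪f x, ∫ y, g y ∂ν⟫ := fun x =>
    mmix_integral_inner_right hg (f x)
  simp_rw [this]
  exact mmix_integral_inner_left hf _

lemma mmix_mp_fst (μ : Measure α) (ν : Measure β) [SFinite μ] [IsProbabilityMeasure ν] :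
    MeasurePreserving (Prod.fst : α × β → α) (μ.prod ν) μ :=
  ⟨measurable_fst, by simp⟩

lemma mmix_mp_snd (μ : Measure α) (ν : Measure β) [IsProbabilityMeasure μ] [SFinite ν] :
    MeasurePreserving (Prod.snd : α × β → β) (μ.prod ν) ν :=
  ⟨measurable_snd, by simp⟩

lemma mmix_shared (μ : Measure α) (ν : Measure β)
    [IsProbabilityMeasure μ] [IsProbabilityMeasure ν]
    {F : α × β → E} (hF : MemLp F 2 (μ.prod ν)) :
    ∫ z : α × (β × β), ⟪F (z.1, z.2.1), F (z.1, z.2.2)⟫ ∂(μ.prod (ν.prod ν))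
      = ∫ x, ‖∫ y, F (x, y) ∂ν‖ ^ 2 ∂μ := by
  have mp1 : MeasurePreserving (fun z : α × (β × β) => (z.1, z.2.1))
      (μ.prod (ν.prod ν)) (μ.prod ν) :=
    (MeasurePreserving.id μ).prod (mmix_mp_fst ν ν)
  have mp2 : MeasurePreserving (fun z : α × (β × β) => (z.1, z.2.2))
      (μ.prod (ν.prod ν)) (μ.prod ν) :=
    (MeasurePreserving.id μ).prod (mmix_mp_snd ν ν)
  have hm1 : MemLp (fun z : α × (β × β) => F (z.1, z.2.1)) 2 (μ.prod (ν.prod ν)) :=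
    hF.comp_measurePreserving mp1
  have hm2 : MemLp (fun z : α × (β × β) => F (z.1, z.2.2)) 2 (μ.prod (ν.prod ν)) :=
    hF.comp_measurePreserving mp2
  have hint := mmix_integrable_inner hm1 hm2
  rw [integral_prod _ hint]
  have hae : ∀ᵐ x ∂μ, Integrable (fun y => F (x, y)) ν :=
    (hF.integrable one_le_two).prod_right_ae
  refine integral_congr_ae ?_
  filter_upwards [hae] with x hx
  rw [mmix_prod_inner ν ν hx hx, real_inner_self_eq_norm_sq]

end helpers

lemma mmix_eval_pi {α : Type*} [MeasurableSpace α] (μ : Measure α) [IsProbabilityMeasure μ]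
    {n : ℕ} (i : Fin n) :
    MeasurePreserving (fun f : Fin n → α => f i) (Measure.pi fun _ => μ) μ := by
  refine ⟨measurable_pi_apply i, ?_⟩
  ext s hs
  rw [Measure.map_apply (measurable_pi_apply i) hs]
  classical
  have hpre : (fun f : Fin n → α => f i) ⁻¹' s
      = Set.pi Set.univ (fun m => if m = i then s else Set.univ) := by
    ext f
    simp only [Set.mem_preimage, Set.mem_pi, Set.mem_univ, true_implies]
    constructor
    · intro hf m
      by_cases hm : m = i <;> simp [hm, hf]
    · intro hf
      have := hf i
      simpa using this
  rw [hpre, Measure.pi_pi]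
  rw [Finset.prod_eq_single i (fun m _ hm => by simp [hm]) (fun h => absurd (Finset.mem_univ i) h)]
  simp

lemma mmix_eval_pair_pi {α : Type*} [MeasurableSpace α] (μ : Measure α) [IsProbabilityMeasure μ]
    {n : ℕ} (i j : Fin n) (hij : i ≠ j) :
    MeasurePreserving (fun f : Fin n → α => (f i, f j)) (Measure.pi fun _ => μ) (μ.prod μ) := by
  have hmeas : Measurable (fun f : Fin n → α => (f i, f j)) :=
    (measurable_pi_apply i).prodMk (measurable_pi_apply j)
  refine ⟨hmeas, ?_⟩
  refine (Measure.prod_eq (μ := μ) (ν := μ) fun s t hs ht => ?_).symm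
  rw [Measure.map_apply hmeas (hs.prod ht)]
  classical
  have hpre : (fun f : Fin n → α => (f i, f j)) ⁻¹' (s ×ˢ t)
      = Set.pi Set.univ (fun m => if m = i then s else if m = j then t else Set.univ) := by
    ext f
    simp only [Set.mem_preimage, Set.mem_prod, Set.mem_pi, Set.mem_univ, true_implies]
    constructor
    · rintro ⟨h1, h2⟩ m
      by_cases hmi : m = i
      · simp [hmi, h1]
      · by_cases hmj : m = j <;> simp [hmi, hmj, h2, hij.symm]
    · intro hf
      refine ⟨?_, ?_⟩
      · have := hf i; simpa using this
      · have := hf j; simpa [hij.symm] using this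
  rw [hpre, Measure.pi_pi]
  have hval : ∀ m : Fin n, μ (if m = i then s else if m = j then t else Set.univ)
      = (if m = i then μ s else if m = j then μ t else 1) := by
    intro m; split_ifs <;> simp
  simp_rw [hval]
  have hj' : j ∈ Finset.univ.erase i := Finset.mem_erase.mpr ⟨hij.symm, Finset.mem_univ j⟩
  rw [← Finset.mul_prod_erase Finset.univ _ (Finset.mem_univ i), if_pos rfl,
    ← Finset.mul_prod_erase _ _ hj', if_neg hij.symm, if_pos rfl]
  have hone : (∏ m ∈ (Finset.univ.erase i).erase j,
      (if m = i then μ s else if m = j then μ t else 1)) = 1 := by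
    refine Finset.prod_eq_one fun m hm => ?_
    have h1 := (Finset.mem_erase.mp hm).1
    have h2 := (Finset.mem_erase.mp (Finset.mem_erase.mp hm).2).1
    rw [if_neg h2, if_neg h1]
  rw [hone, mul_one]

lemma mmix_sum_if_eq {n : ℕ} (k : Fin n) (a b : ℝ) :
    ∑ l : Fin n, (if k = l then a else b) = a + ((n : ℝ) - 1) * b := by
  classical
  have h : ∀ l : Fin n, (if k = l then a else b) = b + (if k = l then (a - b) else 0) :=
    fun l => by split <;> ring
  simp only [h, Finset.sum_add_distrib, Finset.sum_const, Finset.card_univ, Fintype.card_fin,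
    Finset.sum_ite_eq, Finset.mem_univ, if_true, nsmul_eq_mul]
  ring

lemma mmix_norm_sq_sum {E : Type*} [NormedAddCommGroup E] [InnerProductSpace ℝ E]
    {ι : Type*} (s : Finset ι) (f : ι → E) :
    ‖∑ p ∈ s, f p‖ ^ 2 = ∑ r ∈ s ×ˢ s, ⟪f r.1, f r.2⟫ := by
  rw [← real_inner_self_eq_norm_sq, sum_inner, Finset.sum_product]
  exact Finset.sum_congr rfl fun p _ => inner_sum _ _ _



/-- **Exact variance formula for the multi-mix gradient estimator** (key identity in the
proof of Proposition 1): with `B` i.i.d. sample pairs `p_i ∼ μ`, `K` i.i.d. mixing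
weights `λ_k ∼ ν` shared across all pairs (all mutually independent),
`Var[g̃] = (1/K)((1/B) Var[g] + ((B−1)/B) V_λ) + (1 − 1/K)(1/B) V_x`. -/
theorem multi_mix_variance_formula
    {P Λ E : Type*} [MeasurableSpace P] [MeasurableSpace Λ]
    [NormedAddCommGroup E] [InnerProductSpace ℝ E] [FiniteDimensional ℝ E]
    (μ : Measure P) (ν : Measure Λ) [IsProbabilityMeasure μ] [IsProbabilityMeasure ν]
    (g : P × Λ → E) (hg : MemLp g 2 (μ.prod ν))
    (gbar : E) (hgbar : gbar = ∫ x, g x ∂(μ.prod ν))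
    (g1 : P → E) (hg1 : ∀ p, g1 p = ∫ l, g (p, l) ∂ν)
    (g2 : Λ → E) (hg2 : ∀ l, g2 l = ∫ p, g (p, l) ∂μ)
    (Varg Vx Vl : ℝ)
    (hVarg : Varg = ∫ x, ‖g x - gbar‖ ^ 2 ∂(μ.prod ν))
    (hVx : Vx = ∫ p, ‖g1 p - gbar‖ ^ 2 ∂μ)
    (hVl : Vl = ∫ l, ‖g2 l - gbar‖ ^ 2 ∂ν)
    (B K : ℕ) (hB : 1 ≤ B) (hK : 1 ≤ K) :
    ∫ x : (Fin B → P) × (Fin K → Λ),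
        ‖((K : ℝ) * B)⁻¹ • (∑ i : Fin B, ∑ k : Fin K, g (x.1 i, x.2 k)) - gbar‖ ^ 2
      ∂((Measure.pi fun _ : Fin B => μ).prod (Measure.pi fun _ : Fin K => ν))
      = (K : ℝ)⁻¹ * ((B : ℝ)⁻¹ * Varg + (((B : ℝ) - 1) / B) * Vl)
        + (1 - (K : ℝ)⁻¹) * ((B : ℝ)⁻¹ * Vx) := by
  classical
  have hBne : (B : ℝ) ≠ 0 := Nat.cast_ne_zero.mpr (by omega)
  have hKne : (K : ℝ) ≠ 0 := Nat.cast_ne_zero.mpr (by omega)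
  set πB : Measure (Fin B → P) := Measure.pi fun _ => μ with hπB
  set πK : Measure (Fin K → Λ) := Measure.pi fun _ => ν with hπK
  set M : Measure ((Fin B → P) × (Fin K → Λ)) := πB.prod πK with hM
  set h : P × Λ → E := fun y => g y - gbar with hhdef
  set c : ℝ := ((K : ℝ) * B)⁻¹ with hc
  have hh : MemLp h 2 (μ.prod ν) := hg.sub (memLp_const gbar)
  have hgi : Integrable g (μ.prod ν) := hg.integrable one_le_two
  have hhi : Integrable h (μ.prod ν) := hh.integrable one_le_two
  have hmean : ∫ y, h y ∂(μ.prod ν) = 0 := by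
    simp only [hhdef]
    rw [integral_sub hgi (integrable_const gbar), integral_const, probReal_univ]
    simp [hgbar]
  have mpT : ∀ (i : Fin B) (k : Fin K),
      MeasurePreserving (fun x : (Fin B → P) × (Fin K → Λ) => (x.1 i, x.2 k)) M (μ.prod ν) :=
    fun i k => (mmix_eval_pi μ i).prod (mmix_eval_pi ν k)
  have hmemT : ∀ (i : Fin B) (k : Fin K),
      MemLp (fun x : (Fin B → P) × (Fin K → Λ) => h (x.1 i, x.2 k)) 2 M :=
    fun i k => hh.comp_measurePreserving (mpT i k)
  have hintTT : ∀ r : (Fin B × Fin K) × (Fin B × Fin K),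
      Integrable (fun x : (Fin B → P) × (Fin K → Λ) =>
        ⟪h (x.1 r.1.1, x.2 r.1.2), h (x.1 r.2.1, x.2 r.2.2)⟫) M :=
    fun r => mmix_integrable_inner (hmemT r.1.1 r.1.2) (hmemT r.2.1 r.2.2)
  have hcard : c * ((B * K : ℕ) : ℝ) = 1 := by
    rw [hc]; push_cast; field_simp
  -- pointwise identity
  have hpt : ∀ x : (Fin B → P) × (Fin K → Λ),
      ‖c • (∑ i : Fin B, ∑ k : Fin K, g (x.1 i, x.2 k)) - gbar‖ ^ 2
        = c ^ 2 * ∑ r : (Fin B × Fin K) × (Fin B × Fin K),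
            ⟪h (x.1 r.1.1, x.2 r.1.2), h (x.1 r.2.1, x.2 r.2.2)⟫ := by
    intro x
    have hsum0 : ∑ p : Fin B × Fin K, h (x.1 p.1, x.2 p.2)
        = (∑ i : Fin B, ∑ k : Fin K, g (x.1 i, x.2 k)) - ((B * K : ℕ) : ℝ) • gbar := by
      rw [Fintype.sum_prod_type]
      simp only [hhdef]
      simp only [Finset.sum_sub_distrib, Finset.sum_const, Finset.card_univ, Fintype.card_fin,
        smul_smul, Nat.cast_smul_eq_nsmul]
    have hsum : ∑ i : Fin B, ∑ k : Fin K, g (x.1 i, x.2 k)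
        = (∑ p : Fin B × Fin K, h (x.1 p.1, x.2 p.2)) + ((B * K : ℕ) : ℝ) • gbar := by
      rw [hsum0, sub_add_cancel]
    have e1 : c • (∑ i : Fin B, ∑ k : Fin K, g (x.1 i, x.2 k)) - gbar
        = c • (∑ p : Fin B × Fin K, h (x.1 p.1, x.2 p.2)) := by
      rw [hsum, smul_add, smul_smul, hcard, one_smul, add_sub_cancel_right]
    rw [e1, norm_smul, mul_pow, Real.norm_eq_abs, sq_abs]
    congr 1
    rw [mmix_norm_sq_sum]
    rw [Finset.univ_product_univ]
  -- the values of the cross integrals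
  have hI : ∀ p q : Fin B × Fin K,
      ∫ x, ⟪h (x.1 p.1, x.2 p.2), h (x.1 q.1, x.2 q.2)⟫ ∂M
        = if p.1 = q.1 then (if p.2 = q.2 then Varg else Vx)
          else (if p.2 = q.2 then Vl else 0) := by
    rintro ⟨i, k⟩ ⟨j, l⟩
    dsimp only
    by_cases hij : i = j
    · subst hij
      by_cases hkl : k = l
      · subst hkl
        have hG : AEStronglyMeasurable (fun y : P × Λ => ⟪h y, h y⟫) (μ.prod ν) :=
          hh.1.inner hh.1
        have step1 : ∫ x, ⟪h (x.1 i, x.2 k), h (x.1 i, x.2 k)⟫ ∂M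
            = ∫ y, ⟪h y, h y⟫ ∂(μ.prod ν) := by
          rw [← (mpT i k).map_eq]
          exact (integral_map (mpT i k).measurable.aemeasurable
            (by rw [(mpT i k).map_eq]; exact hG)).symm
        have hval : ∫ y, ⟪h y, h y⟫ ∂(μ.prod ν) = Varg := by
          simp_rw [real_inner_self_eq_norm_sq]
          simp only [hhdef]
          rw [hVarg]
        rw [step1, hval]
        simp
      · simp only [if_pos rfl, if_neg hkl]
        have mpU : MeasurePreserving
            (fun x : (Fin B → P) × (Fin K → Λ) => (x.1 i, (x.2 k, x.2 l)))
            M (μ.prod (ν.prod ν)) :=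
          (mmix_eval_pi μ i).prod (mmix_eval_pair_pi ν k l hkl)
        have hG : AEStronglyMeasurable
            (fun z : P × (Λ × Λ) => ⟪h (z.1, z.2.1), h (z.1, z.2.2)⟫) (μ.prod (ν.prod ν)) := by
          have h1 : MemLp (fun z : P × (Λ × Λ) => h (z.1, z.2.1)) 2 (μ.prod (ν.prod ν)) :=
            hh.comp_measurePreserving ((MeasurePreserving.id μ).prod (mmix_mp_fst ν ν))
          have h2 : MemLp (fun z : P × (Λ × Λ) => h (z.1, z.2.2)) 2 (μ.prod (ν.prod ν)) :=
            hh.comp_measurePreserving ((MeasurePreserving.id μ).prod (mmix_mp_snd ν ν))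
          exact h1.1.inner h2.1
        have step1 : ∫ x, ⟪h (x.1 i, x.2 k), h (x.1 i, x.2 l)⟫ ∂M
            = ∫ z : P × (Λ × Λ), ⟪h (z.1, z.2.1), h (z.1, z.2.2)⟫ ∂(μ.prod (ν.prod ν)) := by
          rw [← mpU.map_eq]
          exact (integral_map mpU.measurable.aemeasurable
            (by rw [mpU.map_eq]; exact hG)).symm
        rw [step1, mmix_shared μ ν hh, hVx]
        refine integral_congr_ae ?_
        filter_upwards [hgi.prod_right_ae] with p hp
        have huv : ∫ y, h (p, y) ∂ν = g1 p - gbar := by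
          simp only [hhdef]
          rw [integral_sub hp (integrable_const gbar), integral_const, probReal_univ, ← hg1 p]
          simp
        rw [huv]
    · by_cases hkl : k = l
      · subst hkl
        simp only [if_neg hij, if_pos rfl]
        have mpU : MeasurePreserving
            (fun x : (Fin B → P) × (Fin K → Λ) => (x.2 k, (x.1 i, x.1 j)))
            M (ν.prod (μ.prod μ)) := by
          have h1 : MeasurePreserving (Prod.swap : ((Fin B → P) × (Fin K → Λ)) → _)
              M (πK.prod πB) := Measure.measurePreserving_swap
          have h2 : MeasurePreserving
              (Prod.map (fun f : Fin K → Λ => f k) (fun f : Fin B → P => (f i, f j)))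
              (πK.prod πB) (ν.prod (μ.prod μ)) :=
            (mmix_eval_pi ν k).prod (mmix_eval_pair_pi μ i j hij)
          exact h2.comp h1
        have hFs : MemLp (fun y : Λ × P => h (y.2, y.1)) 2 (ν.prod μ) :=
          hh.comp_measurePreserving Measure.measurePreserving_swap
        have hG : AEStronglyMeasurable
            (fun z : Λ × (P × P) => ⟪h (z.2.1, z.1), h (z.2.2, z.1)⟫) (ν.prod (μ.prod μ)) := by
          have h1 : MemLp (fun z : Λ × (P × P) => h (z.2.1, z.1)) 2 (ν.prod (μ.prod μ)) :=
            hFs.comp_measurePreserving ((MeasurePreserving.id ν).prod (mmix_mp_fst μ μ))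
          have h2 : MemLp (fun z : Λ × (P × P) => h (z.2.2, z.1)) 2 (ν.prod (μ.prod μ)) :=
            hFs.comp_measurePreserving ((MeasurePreserving.id ν).prod (mmix_mp_snd μ μ))
          exact h1.1.inner h2.1
        have step1 : ∫ x, ⟪h (x.1 i, x.2 k), h (x.1 j, x.2 k)⟫ ∂M
            = ∫ z : Λ × (P × P), ⟪h (z.2.1, z.1), h (z.2.2, z.1)⟫ ∂(ν.prod (μ.prod μ)) := by
          rw [← mpU.map_eq]
          exact (integral_map mpU.measurable.aemeasurable
            (by rw [mpU.map_eq]; exact hG)).symm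
        rw [step1, mmix_shared ν μ hFs, hVl]
        refine integral_congr_ae ?_
        filter_upwards [hgi.prod_left_ae] with l0 hl0
        have huv : ∫ p, h (p, l0) ∂μ = g2 l0 - gbar := by
          simp only [hhdef]
          rw [integral_sub hl0 (integrable_const gbar), integral_const, probReal_univ, ← hg2 l0]
          simp
        rw [huv]
      · simp only [if_neg hij, if_neg hkl]
        have mpV : MeasurePreserving
            (fun x : (Fin B → P) × (Fin K → Λ) => ((x.1 i, x.1 j), (x.2 k, x.2 l)))
            M ((μ.prod μ).prod (ν.prod ν)) :=
          (mmix_eval_pair_pi μ i j hij).prod (mmix_eval_pair_pi ν k l hkl)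
        have h1m : MemLp (fun z : (P × P) × (Λ × Λ) => h (z.1.1, z.2.1)) 2
            ((μ.prod μ).prod (ν.prod ν)) :=
          hh.comp_measurePreserving ((mmix_mp_fst μ μ).prod (mmix_mp_fst ν ν))
        have h2m : MemLp (fun z : (P × P) × (Λ × Λ) => h (z.1.2, z.2.2)) 2
            ((μ.prod μ).prod (ν.prod ν)) :=
          hh.comp_measurePreserving ((mmix_mp_snd μ μ).prod (mmix_mp_snd ν ν))
        have hint := mmix_integrable_inner h1m h2m
        have hG : AEStronglyMeasurable
            (fun z : (P × P) × (Λ × Λ) => ⟪h (z.1.1, z.2.1), h (z.1.2, z.2.2)⟫)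
            ((μ.prod μ).prod (ν.prod ν)) := h1m.1.inner h2m.1
        have step1 : ∫ x, ⟪h (x.1 i, x.2 k), h (x.1 j, x.2 l)⟫ ∂M
            = ∫ z : (P × P) × (Λ × Λ), ⟪h (z.1.1, z.2.1), h (z.1.2, z.2.2)⟫
                ∂((μ.prod μ).prod (ν.prod ν)) := by
          rw [← mpV.map_eq]
          exact (integral_map mpV.measurable.aemeasurable
            (by rw [mpV.map_eq]; exact hG)).symm
        have hu : Integrable (fun p => ∫ y, h (p, y) ∂ν) μ := hhi.integral_prod_left
        have humean : ∫ p, ∫ y, h (p, y) ∂ν ∂μ = 0 := by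
          rw [integral_integral hhi]; exact hmean
        have hae2 : ∀ᵐ w : P × P ∂(μ.prod μ),
            Integrable (fun y => h (w.1, y)) ν ∧ Integrable (fun y => h (w.2, y)) ν := by
          have h1 : ∀ᵐ p ∂μ, Integrable (fun y => h (p, y)) ν := hhi.prod_right_ae
          exact (Measure.quasiMeasurePreserving_fst.ae h1).and
            (Measure.quasiMeasurePreserving_snd.ae h1)
        calc ∫ x, ⟪h (x.1 i, x.2 k), h (x.1 j, x.2 l)⟫ ∂M
            = ∫ z : (P × P) × (Λ × Λ), ⟪h (z.1.1, z.2.1), h (z.1.2, z.2.2)⟫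
                ∂((μ.prod μ).prod (ν.prod ν)) := step1
          _ = ∫ w : P × P, ∫ v : Λ × Λ,
                ⟪h (w.1, v.1), h (w.2, v.2)⟫ ∂(ν.prod ν) ∂(μ.prod μ) := integral_prod _ hint
          _ = ∫ w : P × P, ⟪∫ y, h (w.1, y) ∂ν, ∫ y, h (w.2, y) ∂ν⟫ ∂(μ.prod μ) := by
              refine integral_congr_ae ?_
              filter_upwards [hae2] with w hw
              exact mmix_prod_inner ν ν hw.1 hw.2
          _ = ⟪∫ p, ∫ y, h (p, y) ∂ν ∂μ, ∫ p, ∫ y, h (p, y) ∂ν ∂μ⟫ :=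
              mmix_prod_inner μ μ hu hu
          _ = 0 := by rw [humean]; simp
  -- assemble
  calc ∫ x : (Fin B → P) × (Fin K → Λ),
        ‖c • (∑ i : Fin B, ∑ k : Fin K, g (x.1 i, x.2 k)) - gbar‖ ^ 2 ∂M
      = ∫ x, (c ^ 2 * ∑ r : (Fin B × Fin K) × (Fin B × Fin K),
            ⟪h (x.1 r.1.1, x.2 r.1.2), h (x.1 r.2.1, x.2 r.2.2)⟫) ∂M :=
        integral_congr_ae (Filter.Eventually.of_forall fun x => hpt x)
    _ = c ^ 2 * ∫ x, (∑ r : (Fin B × Fin K) × (Fin B × Fin K),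
            ⟪h (x.1 r.1.1, x.2 r.1.2), h (x.1 r.2.1, x.2 r.2.2)⟫) ∂M := integral_const_mul _ _
    _ = c ^ 2 * ∑ r : (Fin B × Fin K) × (Fin B × Fin K),
          ∫ x, ⟪h (x.1 r.1.1, x.2 r.1.2), h (x.1 r.2.1, x.2 r.2.2)⟫ ∂M := by
        rw [integral_finset_sum _ (fun r _ => hintTT r)]
    _ = c ^ 2 * ∑ r : (Fin B × Fin K) × (Fin B × Fin K),
          (if r.1.1 = r.2.1 then (if r.1.2 = r.2.2 then Varg else Vx)
            else (if r.1.2 = r.2.2 then Vl else 0)) := by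
        congr 1
        exact Finset.sum_congr rfl fun r _ => hI r.1 r.2
    _ = c ^ 2 * ((B : ℝ) * K *
          ((Varg + ((K : ℝ) - 1) * Vx) + ((B : ℝ) - 1) * (Vl + ((K : ℝ) - 1) * 0))) := by
        congr 1
        rw [Fintype.sum_prod_type]
        have hq : ∀ p : Fin B × Fin K,
            (∑ q : Fin B × Fin K,
              if p.1 = q.1 then (if p.2 = q.2 then Varg else Vx)
              else (if p.2 = q.2 then Vl else 0))
            = (Varg + ((K : ℝ) - 1) * Vx) + ((B : ℝ) - 1) * (Vl + ((K : ℝ) - 1) * 0) := by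
          rintro ⟨i, k⟩
          rw [Fintype.sum_prod_type]
          have hin : ∀ j : Fin B,
              (∑ l : Fin K, if i = j then (if k = l then Varg else Vx)
                else (if k = l then Vl else 0))
              = if i = j then (Varg + ((K : ℝ) - 1) * Vx) else (Vl + ((K : ℝ) - 1) * 0) := by
            intro j
            split
            · exact mmix_sum_if_eq k Varg Vx
            · exact mmix_sum_if_eq k Vl 0
          simp_rw [hin]
          exact mmix_sum_if_eq i _ _
        simp_rw [hq]
        rw [Finset.sum_const, Finset.card_univ, Fintype.card_prod, Fintype.card_fin,
          Fintype.card_fin, nsmul_eq_mul]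
        push_cast
        ring
    _ = (K : ℝ)⁻¹ * ((B : ℝ)⁻¹ * Varg + (((B : ℝ) - 1) / B) * Vl)
        + (1 - (K : ℝ)⁻¹) * ((B : ℝ)⁻¹ * Vx) := by
        rw [hc]
        field_simp
        ring
end

section
/- (Proposition 2 of the paper.) Let g : P × Λ → E be square-integrable with respect to μ ⊗ ν, with overall mean ḡ and conditional means ḡ₁(p) = ∫ g(p,λ) dν(λ) and ḡ₂(λ) = ∫ g(p,λ) dμ(p). Set V_x = ∫_P ‖ḡ₁(p) − ḡ‖² dμ(p) and V_λ = ∫_Λ ‖ḡ₂(λ) − ḡ‖² dν(λ), and assume V_λ > 0. For integers K > 1 and B ≥ 1, let g̃ be the multi-mix estimator with B i.i.d. pairs and K shared i.i.d. mixing weights, and let g̃' be the large-batch mixup estimator with KB i.i.d. pairs and one shared mixing weight, so both use KB gradient computations. If B ≥ V_x / V_λ, then Var[g̃] ≤ Var[g̃']. -/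
open MeasureTheory

open MeasureTheory Function
open scoped RealInnerProductSpace

section Aux

variable {α β E : Type*} [MeasurableSpace α] [MeasurableSpace β]
  [NormedAddCommGroup E] [InnerProductSpace ℝ E] [CompleteSpace E]

lemma mp_eval {ι : Type*} [Fintype ι] (m : Measure α) [IsProbabilityMeasure m] (i : ι) :
    MeasurePreserving (fun x : ι → α => x i) (Measure.pi fun _ => m) m := by
  classical
  refine ⟨measurable_pi_apply i, ?_⟩
  ext s hs
  rw [Measure.map_apply (measurable_pi_apply i) hs]
  have hpre : (fun x : ι → α => x i) ⁻¹' s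
      = Set.pi Set.univ (Function.update (fun _ : ι => (Set.univ : Set α)) i s) := by
    ext x
    simp [Function.update_apply]
  rw [hpre, Measure.pi_pi]
  rw [Finset.prod_eq_single i (fun b _ hb => by simp [Function.update_apply, hb]) (by simp)]
  simp

lemma mp_eval_pair {ι : Type*} [Fintype ι] (m : Measure α) [IsProbabilityMeasure m]
    {i j : ι} (hij : i ≠ j) :
    MeasurePreserving (fun x : ι → α => (x i, x j)) (Measure.pi fun _ => m) (m.prod m) := by
  classical
  refine ⟨(measurable_pi_apply i).prodMk (measurable_pi_apply j), ?_⟩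
  refine (Measure.prod_eq fun s t hs ht => ?_).symm
  rw [Measure.map_apply ((measurable_pi_apply i).prodMk (measurable_pi_apply j)) (hs.prod ht)]
  have hpre : (fun x : ι → α => (x i, x j)) ⁻¹' (s ×ˢ t)
      = Set.pi Set.univ
          (Function.update (Function.update (fun _ : ι => (Set.univ : Set α)) i s) j t) := by
    ext x
    simp only [Set.mem_preimage, Set.mem_prod, Set.mem_univ_pi, Function.update_apply]
    constructor
    · rintro ⟨h1, h2⟩ k
      by_cases hk : k = j
      · simp [hk, h2]
      · by_cases hk' : k = i <;> simp [hk, hk', hij, h1]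
    · intro h
      have h1 := h i
      have h2 := h j
      simp [hij, if_neg hij] at h1 h2
      exact ⟨h1, h2⟩
  rw [hpre, Measure.pi_pi]
  rw [← Finset.prod_subset (Finset.subset_univ ({i, j} : Finset ι))
    (fun k _ hk => by
      simp only [Finset.mem_insert, Finset.mem_singleton, not_or] at hk
      simp [Function.update_apply, hk.1, hk.2])]
  rw [Finset.prod_pair hij]
  simp [Function.update_apply, hij]

lemma integrable_inner_of_memL2 {m : Measure α} {X Y : α → E}
    (hX : MemLp X 2 m) (hY : MemLp Y 2 m) :
    Integrable (fun a => ⟪X a, Y a⟫) m := by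
  have h := L2.integrable_inner (𝕜 := ℝ) (hX.toLp X) (hY.toLp Y)
  apply h.congr
  filter_upwards [hX.coeFn_toLp, hY.coeFn_toLp] with a h1 h2
  rw [h1, h2]

lemma inner_double {mα : Measure α} {mβ : Measure β} [SigmaFinite mα] [SigmaFinite mβ]
    {F : α → E} {G : β → E} (hF : Integrable F mα) (hG : Integrable G mβ) :
    ∫ z : α × β, ⟪F z.1, G z.2⟫ ∂(mα.prod mβ) = ⟪∫ a, F a ∂mα, ∫ b, G b ∂mβ⟫ := by
  have hint : Integrable (fun z : α × β => ⟪F z.1, G z.2⟫) (mα.prod mβ) := by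
    have hprod : Integrable (fun z : α × β => ‖F z.1‖ * ‖G z.2‖) (mα.prod mβ) :=
      hF.norm.mul_prod hG.norm
    refine hprod.mono' ?_ ?_
    · exact (continuous_inner.comp_aestronglyMeasurable
        ((hF.1.comp_quasiMeasurePreserving Measure.quasiMeasurePreserving_fst).prodMk
         (hG.1.comp_quasiMeasurePreserving Measure.quasiMeasurePreserving_snd)))
    · refine Filter.Eventually.of_forall fun z => ?_
      simpa using abs_real_inner_le_norm (F z.1) (G z.2)
  rw [MeasureTheory.integral_prod _ hint]
  have h1 : ∀ a, ∫ b, ⟪F a, G b⟫ ∂mβ = ⟪F a, ∫ b, G b ∂mβ⟫ := fun a => integral_inner hG _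
  simp_rw [h1]
  have h2 : ∀ a, ⟪F a, ∫ b, G b ∂mβ⟫ = ⟪∫ b, G b ∂mβ, F a⟫ := fun a => real_inner_comm _ _
  simp_rw [h2, integral_inner hF, real_inner_comm]

end Aux

section Aux2

variable {α β E : Type*} [MeasurableSpace α] [MeasurableSpace β]
  [NormedAddCommGroup E] [InnerProductSpace ℝ E] [CompleteSpace E]

lemma mp_fst (mα : Measure α) (mβ : Measure β) [SigmaFinite mα] [IsProbabilityMeasure mβ] :
    MeasurePreserving (Prod.fst : α × β → α) (mα.prod mβ) mα :=
  ⟨measurable_fst, by simp⟩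

lemma mp_snd (mα : Measure α) (mβ : Measure β) [IsProbabilityMeasure mα] [SigmaFinite mβ] :
    MeasurePreserving (Prod.snd : α × β → β) (mα.prod mβ) mβ :=
  ⟨measurable_snd, by simp⟩

lemma integral_comp_mp {G : Type*} [NormedAddCommGroup G] [NormedSpace ℝ G]
    {mα : Measure α} {mβ : Measure β} {T : α → β} (hT : MeasurePreserving T mα mβ)
    {F : β → G} (hF : AEStronglyMeasurable F mβ) :
    ∫ x, F (T x) ∂mα = ∫ y, F y ∂mβ := by
  conv_rhs => rw [← hT.map_eq]
  exact (integral_map hT.measurable.aemeasurable (by rwa [hT.map_eq])).symm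

end Aux2

section Key

variable {P Λ E : Type*} [MeasurableSpace P] [MeasurableSpace Λ]
  [NormedAddCommGroup E] [InnerProductSpace ℝ E] [CompleteSpace E]
  (μ : Measure P) (ν : Measure Λ) [IsProbabilityMeasure μ] [IsProbabilityMeasure ν]

lemma key_variance {ι κ : Type*} [Fintype ι] [Fintype κ]
    (f : P × Λ → E) (hfm : StronglyMeasurable f) (hf2 : MemLp f 2 (μ.prod ν))
    (hf0 : ∫ z, f z ∂(μ.prod ν) = 0) :
    ∫ x : (ι → P) × (κ → Λ), ‖∑ i : ι, ∑ k : κ, f (x.1 i, x.2 k)‖ ^ 2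
        ∂((Measure.pi fun _ : ι => μ).prod (Measure.pi fun _ : κ => ν))
      = (Fintype.card ι : ℝ) * (Fintype.card κ : ℝ) * (∫ z, ‖f z‖ ^ 2 ∂(μ.prod ν))
        + (Fintype.card ι : ℝ) * ((Fintype.card κ : ℝ) * ((Fintype.card κ : ℝ) - 1))
            * (∫ p, ‖∫ l, f (p, l) ∂ν‖ ^ 2 ∂μ)
        + (Fintype.card κ : ℝ) * ((Fintype.card ι : ℝ) * ((Fintype.card ι : ℝ) - 1))
            * (∫ l, ‖∫ p, f (p, l) ∂μ‖ ^ 2 ∂ν) := by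
  classical
  set π : Measure ((ι → P) × (κ → Λ)) :=
    (Measure.pi fun _ : ι => μ).prod (Measure.pi fun _ : κ => ν) with hπ
  set V : ℝ := ∫ z, ‖f z‖ ^ 2 ∂(μ.prod ν) with hV
  set Vx : ℝ := ∫ p, ‖∫ l, f (p, l) ∂ν‖ ^ 2 ∂μ with hVx
  set Vl : ℝ := ∫ l, ‖∫ p, f (p, l) ∂μ‖ ^ 2 ∂ν with hVl
  set n : ℝ := (Fintype.card ι : ℝ) with hn
  set m : ℝ := (Fintype.card κ : ℝ) with hm
  -- basic integrability facts
  have hfi : Integrable f (μ.prod ν) := hf2.integrable one_le_two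
  have ha1 : Integrable (fun p => ∫ l, f (p, l) ∂ν) μ := hfi.integral_prod_left
  have ha2 : Integrable (fun l => ∫ p, f (p, l) ∂μ) ν := hfi.swap.integral_prod_left
  have ha10 : ∫ p, (∫ l, f (p, l) ∂ν) ∂μ = 0 := by
    rw [← MeasureTheory.integral_prod f hfi]; exact hf0
  have hsecP : ∀ᵐ p ∂μ, Integrable (fun l => f (p, l)) ν := hfi.prod_right_ae
  have hsecΛ : ∀ᵐ l ∂ν, Integrable (fun p => f (p, l)) μ := hfi.prod_left_ae
  -- measure preserving coordinate maps
  have hψ : ∀ (i : ι) (k : κ), MeasurePreserving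
      (fun x : (ι → P) × (κ → Λ) => (x.1 i, x.2 k)) π (μ.prod ν) :=
    fun i k => (mp_eval μ i).prod (mp_eval ν k)
  have hX : ∀ (i : ι) (k : κ),
      MemLp (fun x : (ι → P) × (κ → Λ) => f (x.1 i, x.2 k)) 2 π :=
    fun i k => hf2.comp_measurePreserving (hψ i k)
  have hIint : ∀ (i i' : ι) (k k' : κ), Integrable
      (fun x : (ι → P) × (κ → Λ) => ⟪f (x.1 i, x.2 k), f (x.1 i', x.2 k')⟫) π :=
    fun i i' k k' => integrable_inner_of_memL2 (hX i k) (hX i' k')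
  -- the four values of the cross terms
  have hJV : ∀ (i : ι) (k : κ),
      (∫ x, ⟪f (x.1 i, x.2 k), f (x.1 i, x.2 k)⟫ ∂π) = V := by
    intro i k
    have hsm : AEStronglyMeasurable (fun z : P × Λ => ⟪f z, f z⟫) (μ.prod ν) :=
      (hfm.inner hfm).aestronglyMeasurable
    refine (integral_comp_mp (hψ i k) hsm).trans ?_
    rw [hV]
    apply integral_congr_ae
    exact Filter.Eventually.of_forall fun z => real_inner_self_eq_norm_sq (f z)
  have hJx : ∀ (i : ι) (k k' : κ), k ≠ k' →
      (∫ x, ⟪f (x.1 i, x.2 k), f (x.1 i, x.2 k')⟫ ∂π) = Vx := by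
    intro i k k' hkk'
    have hψB : MeasurePreserving (fun x : (ι → P) × (κ → Λ) => (x.1 i, (x.2 k, x.2 k')))
        π (μ.prod (ν.prod ν)) := (mp_eval μ i).prod (mp_eval_pair ν hkk')
    have hT1 : MeasurePreserving (fun z : P × (Λ × Λ) => (z.1, z.2.1))
        (μ.prod (ν.prod ν)) (μ.prod ν) := (MeasurePreserving.id μ).prod (mp_fst ν ν)
    have hT2 : MeasurePreserving (fun z : P × (Λ × Λ) => (z.1, z.2.2))
        (μ.prod (ν.prod ν)) (μ.prod ν) := (MeasurePreserving.id μ).prod (mp_snd ν ν)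
    have hFint : Integrable (fun z : P × (Λ × Λ) => ⟪f (z.1, z.2.1), f (z.1, z.2.2)⟫)
        (μ.prod (ν.prod ν)) :=
      integrable_inner_of_memL2 (hf2.comp_measurePreserving hT1)
        (hf2.comp_measurePreserving hT2)
    refine (integral_comp_mp hψB hFint.1).trans ?_
    rw [MeasureTheory.integral_prod _ hFint, hVx]
    apply integral_congr_ae
    filter_upwards [hsecP] with p hp
    rw [inner_double hp hp, real_inner_self_eq_norm_sq]
  have hJl : ∀ (i i' : ι) (k : κ), i ≠ i' →
      (∫ x, ⟪f (x.1 i, x.2 k), f (x.1 i', x.2 k)⟫ ∂π) = Vl := by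
    intro i i' k hii'
    have hψC : MeasurePreserving (fun x : (ι → P) × (κ → Λ) => (x.2 k, (x.1 i, x.1 i')))
        π (ν.prod (μ.prod μ)) :=
      ((mp_eval ν k).prod (mp_eval_pair μ hii')).comp Measure.measurePreserving_swap
    have hT1 : MeasurePreserving (fun z : Λ × (P × P) => (z.2.1, z.1))
        (ν.prod (μ.prod μ)) (μ.prod ν) :=
      Measure.measurePreserving_swap.comp ((MeasurePreserving.id ν).prod (mp_fst μ μ))
    have hT2 : MeasurePreserving (fun z : Λ × (P × P) => (z.2.2, z.1))
        (ν.prod (μ.prod μ)) (μ.prod ν) :=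
      Measure.measurePreserving_swap.comp ((MeasurePreserving.id ν).prod (mp_snd μ μ))
    have hFint : Integrable (fun z : Λ × (P × P) => ⟪f (z.2.1, z.1), f (z.2.2, z.1)⟫)
        (ν.prod (μ.prod μ)) :=
      integrable_inner_of_memL2 (hf2.comp_measurePreserving hT1)
        (hf2.comp_measurePreserving hT2)
    refine (integral_comp_mp hψC hFint.1).trans ?_
    rw [MeasureTheory.integral_prod _ hFint, hVl]
    apply integral_congr_ae
    filter_upwards [hsecΛ] with l hl
    rw [inner_double hl hl, real_inner_self_eq_norm_sq]
  have hJ0 : ∀ (i i' : ι) (k k' : κ), i ≠ i' → k ≠ k' →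
      (∫ x, ⟪f (x.1 i, x.2 k), f (x.1 i', x.2 k')⟫ ∂π) = 0 := by
    intro i i' k k' hii' hkk'
    have hψD : MeasurePreserving
        (fun x : (ι → P) × (κ → Λ) => ((x.1 i, x.1 i'), (x.2 k, x.2 k')))
        π ((μ.prod μ).prod (ν.prod ν)) :=
      (mp_eval_pair μ hii').prod (mp_eval_pair ν hkk')
    have hT1 : MeasurePreserving (fun z : (P × P) × (Λ × Λ) => (z.1.1, z.2.1))
        ((μ.prod μ).prod (ν.prod ν)) (μ.prod ν) := (mp_fst μ μ).prod (mp_fst ν ν)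
    have hT2 : MeasurePreserving (fun z : (P × P) × (Λ × Λ) => (z.1.2, z.2.2))
        ((μ.prod μ).prod (ν.prod ν)) (μ.prod ν) := (mp_snd μ μ).prod (mp_snd ν ν)
    have hFint : Integrable
        (fun z : (P × P) × (Λ × Λ) => ⟪f (z.1.1, z.2.1), f (z.1.2, z.2.2)⟫)
        ((μ.prod μ).prod (ν.prod ν)) :=
      integrable_inner_of_memL2 (hf2.comp_measurePreserving hT1)
        (hf2.comp_measurePreserving hT2)
    refine (integral_comp_mp hψD hFint.1).trans ?_
    rw [MeasureTheory.integral_prod _ hFint]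
    have hs1 : ∀ᵐ w : P × P ∂(μ.prod μ), Integrable (fun l => f (w.1, l)) ν :=
      (mp_fst μ μ).quasiMeasurePreserving.tendsto_ae.eventually hsecP
    have hs2 : ∀ᵐ w : P × P ∂(μ.prod μ), Integrable (fun l => f (w.2, l)) ν :=
      (mp_snd μ μ).quasiMeasurePreserving.tendsto_ae.eventually hsecP
    have hae : (fun w : P × P => ∫ z : Λ × Λ, ⟪f (w.1, z.1), f (w.2, z.2)⟫ ∂(ν.prod ν))
        =ᵐ[μ.prod μ] fun w : P × P => ⟪∫ l, f (w.1, l) ∂ν, ∫ l, f (w.2, l) ∂ν⟫ := by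
      filter_upwards [hs1, hs2] with w h1 h2
      exact inner_double h1 h2
    rw [integral_congr_ae hae, inner_double ha1 ha1, ha10, inner_zero_left]
  -- row sums
  set Jf : ι × κ → ι × κ → ℝ := fun a b =>
    ∫ x, ⟪f (x.1 a.1, x.2 a.2), f (x.1 b.1, x.2 b.2)⟫ ∂π with hJf
  have hrow : ∀ a : ι × κ, ∑ b : ι × κ, Jf a b = V + (m - 1) * Vx + (n - 1) * Vl := by
    rintro ⟨i, k⟩
    have hmpos : 1 ≤ Fintype.card κ := Fintype.card_pos_iff.mpr ⟨k⟩
    have hnpos : 1 ≤ Fintype.card ι := Fintype.card_pos_iff.mpr ⟨i⟩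
    have hm1 : ((Fintype.card κ - 1 : ℕ) : ℝ) = m - 1 := by
      rw [Nat.cast_sub hmpos]; simp [hm]
    have hn1 : ((Fintype.card ι - 1 : ℕ) : ℝ) = n - 1 := by
      rw [Nat.cast_sub hnpos]; simp [hn]
    have hsplit : ∑ b : ι × κ, Jf (i, k) b = ∑ i' : ι, ∑ k' : κ, Jf (i, k) (i', k') :=
      Fintype.sum_prod_type (f := fun b : ι × κ => Jf (i, k) b)
    rw [hsplit]
    have hGi : ∑ k' : κ, Jf (i, k) (i, k') = V + (m - 1) * Vx := by
      rw [← Finset.add_sum_erase Finset.univ (fun k' => Jf (i, k) (i, k')) (Finset.mem_univ k)]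
      have hc : ∀ k' ∈ Finset.univ.erase k, Jf (i, k) (i, k') = Vx := fun k' hk' =>
        hJx i k k' (Ne.symm (Finset.mem_erase.mp hk').1)
      rw [Finset.sum_congr rfl hc, Finset.sum_const,
        Finset.card_erase_of_mem (Finset.mem_univ k), Finset.card_univ, nsmul_eq_mul, hm1]
      rw [show Jf (i, k) (i, k) = V from hJV i k]
    have hG : ∀ i' ∈ Finset.univ.erase i, ∑ k' : κ, Jf (i, k) (i', k') = Vl := by
      intro i' hi'
      have hii' : i ≠ i' := Ne.symm (Finset.mem_erase.mp hi').1
      rw [← Finset.add_sum_erase Finset.univ (fun k' => Jf (i, k) (i', k')) (Finset.mem_univ k)]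
      have hz : ∀ k' ∈ Finset.univ.erase k, Jf (i, k) (i', k') = 0 := fun k' hk' =>
        hJ0 i i' k k' hii' (Ne.symm (Finset.mem_erase.mp hk').1)
      rw [Finset.sum_congr rfl hz, Finset.sum_const, smul_zero,
        show Jf (i, k) (i', k) = Vl from hJl i i' k hii', add_zero]
    rw [← Finset.add_sum_erase Finset.univ (fun i' => ∑ k' : κ, Jf (i, k) (i', k'))
      (Finset.mem_univ i)]
    rw [hGi, Finset.sum_congr rfl hG, Finset.sum_const,
      Finset.card_erase_of_mem (Finset.mem_univ i), Finset.card_univ, nsmul_eq_mul, hn1]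
  -- expansion of the squared norm
  have hexp : ∀ x : (ι → P) × (κ → Λ),
      ‖∑ i : ι, ∑ k : κ, f (x.1 i, x.2 k)‖ ^ 2
        = ∑ a : ι × κ, ∑ b : ι × κ,
            ⟪f (x.1 a.1, x.2 a.2), f (x.1 b.1, x.2 b.2)⟫ := by
    intro x
    rw [← real_inner_self_eq_norm_sq]
    rw [show (∑ i : ι, ∑ k : κ, f (x.1 i, x.2 k)) = ∑ a : ι × κ, f (x.1 a.1, x.2 a.2) from
      (Fintype.sum_prod_type (f := fun a : ι × κ => f (x.1 a.1, x.2 a.2))).symm]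
    simp_rw [sum_inner, inner_sum]
  calc ∫ x, ‖∑ i : ι, ∑ k : κ, f (x.1 i, x.2 k)‖ ^ 2 ∂π
      = ∫ x, (∑ a : ι × κ, ∑ b : ι × κ,
          ⟪f (x.1 a.1, x.2 a.2), f (x.1 b.1, x.2 b.2)⟫) ∂π :=
        integral_congr_ae (Filter.Eventually.of_forall hexp)
    _ = ∑ a : ι × κ, ∫ x, (∑ b : ι × κ,
          ⟪f (x.1 a.1, x.2 a.2), f (x.1 b.1, x.2 b.2)⟫) ∂π :=
        integral_finset_sum _ (fun a _ => integrable_finset_sum _ (fun b _ => hIint _ _ _ _))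
    _ = ∑ a : ι × κ, ∑ b : ι × κ, Jf a b :=
        Finset.sum_congr rfl fun a _ => integral_finset_sum _ (fun b _ => hIint _ _ _ _)
    _ = ∑ _a : ι × κ, (V + (m - 1) * Vx + (n - 1) * Vl) :=
        Finset.sum_congr rfl fun a _ => hrow a
    _ = (n * m) * (V + (m - 1) * Vx + (n - 1) * Vl) := by
        rw [Finset.sum_const, Finset.card_univ, Fintype.card_prod, nsmul_eq_mul]
        push_cast [hn, hm]
        ring
    _ = n * m * V + n * (m * (m - 1)) * Vx + m * (n * (n - 1)) * Vl := by ring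

end Key

section SmulSum

variable {E : Type*} [NormedAddCommGroup E] [NormedSpace ℝ E]

lemma smul_sum_sub {ιB ιK : Type*} [Fintype ιB] [Fintype ιK] (c : ℝ)
    (hc : c * ((Fintype.card ιB * Fintype.card ιK : ℕ) : ℝ) = 1)
    (F : ιB → ιK → E) (gbar : E) :
    c • (∑ i : ιB, ∑ k : ιK, F i k) - gbar = c • (∑ i : ιB, ∑ k : ιK, (F i k - gbar)) := by
  have h1 : ∑ i : ιB, ∑ k : ιK, (F i k - gbar)
      = (∑ i : ιB, ∑ k : ιK, F i k) - (Fintype.card ιB * Fintype.card ιK : ℕ) • gbar := by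
    simp [Finset.sum_sub_distrib, Finset.sum_const, Finset.card_univ, mul_smul]
  rw [h1, smul_sub, ← Nat.cast_smul_eq_nsmul ℝ, smul_smul, hc, one_smul]

end SmulSum

open Filter



/-- **Proposition 2: at equal computational cost, multi-mix has smaller
stochastic-gradient variance than large-batch mixup once the batch size is large
enough.** If `V_λ > 0`, `K > 1`, `B ≥ 1` and `B ≥ V_x / V_λ`, then the variance of the
multi-mix estimator (with `B` i.i.d. pairs and `K` shared i.i.d. mixing weights) is at
most the variance of the large-batch mixup estimator (with `KB` i.i.d. pairs and one
shared mixing weight). -/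
theorem multi_mix_vs_large_batch
    {P Λ E : Type*} [MeasurableSpace P] [MeasurableSpace Λ]
    [NormedAddCommGroup E] [InnerProductSpace ℝ E] [FiniteDimensional ℝ E]
    (μ : Measure P) (ν : Measure Λ) [IsProbabilityMeasure μ] [IsProbabilityMeasure ν]
    (g : P × Λ → E) (hg : MemLp g 2 (μ.prod ν))
    (gbar : E) (hgbar : gbar = ∫ x, g x ∂(μ.prod ν))
    (g1 : P → E) (hg1 : ∀ p, g1 p = ∫ l, g (p, l) ∂ν)
    (g2 : Λ → E) (hg2 : ∀ l, g2 l = ∫ p, g (p, l) ∂μ)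
    (Vx Vl : ℝ)
    (hVx : Vx = ∫ p, ‖g1 p - gbar‖ ^ 2 ∂μ)
    (hVl : Vl = ∫ l, ‖g2 l - gbar‖ ^ 2 ∂ν)
    (hVlpos : 0 < Vl)
    (B K : ℕ) (hB : 1 ≤ B) (hK : 1 < K)
    (hBlarge : Vx / Vl ≤ (B : ℝ)) :
    ∫ x : (Fin B → P) × (Fin K → Λ),
        ‖((K : ℝ) * B)⁻¹ • (∑ i : Fin B, ∑ k : Fin K, g (x.1 i, x.2 k)) - gbar‖ ^ 2
      ∂((Measure.pi fun _ : Fin B => μ).prod (Measure.pi fun _ : Fin K => ν))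
    ≤ ∫ x : (Fin (K * B) → P) × Λ,
        ‖((K : ℝ) * B)⁻¹ • (∑ i : Fin (K * B), g (x.1 i, x.2)) - gbar‖ ^ 2
      ∂((Measure.pi fun _ : Fin (K * B) => μ).prod ν) := by
  classical
  obtain ⟨g', hg'sm, hgg'⟩ : ∃ g' : P × Λ → E, StronglyMeasurable g' ∧ g =ᵐ[μ.prod ν] g' :=
    ⟨hg.aestronglyMeasurable.mk g, hg.aestronglyMeasurable.stronglyMeasurable_mk,
      hg.aestronglyMeasurable.ae_eq_mk⟩
  set f : P × Λ → E := fun z => g' z - gbar with hfdef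
  have hfm : StronglyMeasurable f := hg'sm.sub stronglyMeasurable_const
  have hg2' : MemLp g' 2 (μ.prod ν) := hg.ae_eq hgg'
  have hf2 : MemLp f 2 (μ.prod ν) := hg2'.sub (memLp_const gbar)
  have hgint : Integrable g (μ.prod ν) := hg.integrable one_le_two
  have hg'int : Integrable g' (μ.prod ν) := hg2'.integrable one_le_two
  have hg'bar : ∫ z, g' z ∂(μ.prod ν) = gbar := by
    rw [← integral_congr_ae hgg', ← hgbar]
  have hf0 : ∫ z, f z ∂(μ.prod ν) = 0 := by
    have : ∫ z, (g' z - gbar) ∂(μ.prod ν)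
        = (∫ z, g' z ∂(μ.prod ν)) - gbar := by
      rw [integral_sub hg'int (integrable_const gbar), integral_const]
      simp
    simpa [hfdef, hg'bar] using this
  -- identification of Vx and Vl
  have haeP : ∀ᵐ p ∂μ, ∀ᵐ l ∂ν, g (p, l) = g' (p, l) := Measure.ae_ae_of_ae_prod hgg'
  have hsecPg : ∀ᵐ p ∂μ, Integrable (fun l => g (p, l)) ν := hgint.prod_right_ae
  have hVxf : Vx = ∫ p, ‖∫ l, f (p, l) ∂ν‖ ^ 2 ∂μ := by
    rw [hVx]
    apply integral_congr_ae
    filter_upwards [haeP, hsecPg] with p hpae hpint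
    have h1 : ∫ l, f (p, l) ∂ν = (∫ l, g' (p, l) ∂ν) - gbar := by
      rw [show (fun l => f (p, l)) = fun l => g' (p, l) - gbar from rfl]
      rw [integral_sub (hpint.congr hpae) (integrable_const gbar), integral_const]
      simp
    have h2 : ∫ l, g' (p, l) ∂ν = g1 p := by
      rw [← integral_congr_ae hpae, ← hg1 p]
    rw [h1, h2]
  have hswapae : ∀ᵐ l ∂ν, ∀ᵐ p ∂μ, g (p, l) = g' (p, l) := by
    have h : ∀ᵐ z : Λ × P ∂(ν.prod μ), g (z.2, z.1) = g' (z.2, z.1) :=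
      Measure.measurePreserving_swap.quasiMeasurePreserving.tendsto_ae.eventually hgg'
    exact Measure.ae_ae_of_ae_prod h
  have hsecLg : ∀ᵐ l ∂ν, Integrable (fun p => g (p, l)) μ := hgint.prod_left_ae
  have hVlf : Vl = ∫ l, ‖∫ p, f (p, l) ∂μ‖ ^ 2 ∂ν := by
    rw [hVl]
    apply integral_congr_ae
    filter_upwards [hswapae, hsecLg] with l hlae hlint
    have h1 : ∫ p, f (p, l) ∂μ = (∫ p, g' (p, l) ∂μ) - gbar := by
      rw [show (fun p => f (p, l)) = fun p => g' (p, l) - gbar from rfl]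
      rw [integral_sub (hlint.congr hlae) (integrable_const gbar), integral_const]
      simp
    have h2 : ∫ p, g' (p, l) ∂μ = g2 l := by
      rw [← integral_congr_ae hlae, ← hg2 l]
    rw [h1, h2]
  -- the scalar
  set c : ℝ := ((K : ℝ) * B)⁻¹ with hcdef
  have hKpos : (0 : ℝ) < K := by exact_mod_cast Nat.lt_of_lt_of_le Nat.zero_lt_one hK.le
  have hBpos : (0 : ℝ) < B := by exact_mod_cast Nat.lt_of_lt_of_le Nat.zero_lt_one hB
  have hKBne : ((K : ℝ) * B) ≠ 0 := by positivity
  have hc1 : c * ((Fintype.card (Fin B) * Fintype.card (Fin K) : ℕ) : ℝ) = 1 := by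
    simp only [Fintype.card_fin]
    push_cast
    rw [hcdef]
    field_simp
  have hc1' : c * ((Fintype.card (Fin (K * B)) * Fintype.card (Fin 1) : ℕ) : ℝ) = 1 := by
    simp only [Fintype.card_fin]
    push_cast
    rw [hcdef]
    field_simp
  set V : ℝ := ∫ z, ‖f z‖ ^ 2 ∂(μ.prod ν) with hVdef
  -- multi-mix side
  have hMM : ∫ x : (Fin B → P) × (Fin K → Λ),
        ‖c • (∑ i : Fin B, ∑ k : Fin K, g (x.1 i, x.2 k)) - gbar‖ ^ 2
        ∂((Measure.pi fun _ : Fin B => μ).prod (Measure.pi fun _ : Fin K => ν))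
      = c ^ 2 * ((B : ℝ) * (K : ℝ) * V
          + (B : ℝ) * ((K : ℝ) * ((K : ℝ) - 1)) * Vx
          + (K : ℝ) * ((B : ℝ) * ((B : ℝ) - 1)) * Vl) := by
    have hae : ∀ᵐ x ∂((Measure.pi fun _ : Fin B => μ).prod (Measure.pi fun _ : Fin K => ν)),
        ∑ i : Fin B, ∑ k : Fin K, g (x.1 i, x.2 k)
          = ∑ i : Fin B, ∑ k : Fin K, g' (x.1 i, x.2 k) := by
      have h1 : ∀ᵐ x ∂((Measure.pi fun _ : Fin B => μ).prod (Measure.pi fun _ : Fin K => ν)),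
          ∀ (i : Fin B) (k : Fin K), g (x.1 i, x.2 k) = g' (x.1 i, x.2 k) := by
        rw [MeasureTheory.ae_all_iff]
        intro i
        rw [MeasureTheory.ae_all_iff]
        intro k
        exact ((mp_eval μ i).prod (mp_eval ν k)).quasiMeasurePreserving.tendsto_ae.eventually hgg'
      filter_upwards [h1] with x hx
      exact Finset.sum_congr rfl fun i _ => Finset.sum_congr rfl fun k _ => hx i k
    calc ∫ x : (Fin B → P) × (Fin K → Λ),
          ‖c • (∑ i : Fin B, ∑ k : Fin K, g (x.1 i, x.2 k)) - gbar‖ ^ 2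
          ∂((Measure.pi fun _ : Fin B => μ).prod (Measure.pi fun _ : Fin K => ν))
        = ∫ x : (Fin B → P) × (Fin K → Λ),
            c ^ 2 * ‖∑ i : Fin B, ∑ k : Fin K, f (x.1 i, x.2 k)‖ ^ 2
          ∂((Measure.pi fun _ : Fin B => μ).prod (Measure.pi fun _ : Fin K => ν)) := by
          apply integral_congr_ae
          filter_upwards [hae] with x hx
          rw [hx, smul_sum_sub c hc1 (fun i k => g' (x.1 i, x.2 k)) gbar, norm_smul,
            mul_pow, Real.norm_eq_abs, sq_abs]
      _ = c ^ 2 * ∫ x : (Fin B → P) × (Fin K → Λ),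
            ‖∑ i : Fin B, ∑ k : Fin K, f (x.1 i, x.2 k)‖ ^ 2
          ∂((Measure.pi fun _ : Fin B => μ).prod (Measure.pi fun _ : Fin K => ν)) :=
          integral_const_mul _ _
      _ = c ^ 2 * ((B : ℝ) * (K : ℝ) * V
          + (B : ℝ) * ((K : ℝ) * ((K : ℝ) - 1)) * Vx
          + (K : ℝ) * ((B : ℝ) * ((B : ℝ) - 1)) * Vl) := by
          rw [key_variance μ ν f hfm hf2 hf0, hVxf, hVlf]
          simp [Fintype.card_fin, hVdef]
  -- large-batch side
  have hρ : MeasurePreserving (fun y : (Fin (K * B) → P) × (Fin 1 → Λ) => (y.1, y.2 0))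
      ((Measure.pi fun _ : Fin (K * B) => μ).prod (Measure.pi fun _ : Fin 1 => ν))
      ((Measure.pi fun _ : Fin (K * B) => μ).prod ν) :=
    (MeasurePreserving.id _).prod (mp_eval ν 0)
  have hsmL : StronglyMeasurable fun x : (Fin (K * B) → P) × Λ =>
      ‖c • (∑ i : Fin (K * B), g' (x.1 i, x.2)) - gbar‖ ^ 2 := by
    have hsum : StronglyMeasurable fun x : (Fin (K * B) → P) × Λ =>
        ∑ i : Fin (K * B), g' (x.1 i, x.2) :=
      Finset.stronglyMeasurable_fun_sum _ fun i _ =>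
        hg'sm.comp_measurable (((measurable_pi_apply i).comp measurable_fst).prodMk
          measurable_snd)
    exact ((((hsum.const_smul c).sub stronglyMeasurable_const).norm).measurable.pow_const
      2).stronglyMeasurable
  have haeL : ∀ᵐ x ∂((Measure.pi fun _ : Fin (K * B) => μ).prod ν),
      ∑ i : Fin (K * B), g (x.1 i, x.2) = ∑ i : Fin (K * B), g' (x.1 i, x.2) := by
    have h1 : ∀ᵐ x ∂((Measure.pi fun _ : Fin (K * B) => μ).prod ν),
        ∀ i : Fin (K * B), g (x.1 i, x.2) = g' (x.1 i, x.2) := by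
      rw [MeasureTheory.ae_all_iff]
      intro i
      exact ((mp_eval μ i).prod (MeasurePreserving.id ν)).quasiMeasurePreserving.tendsto_ae.eventually hgg'
    filter_upwards [h1] with x hx
    exact Finset.sum_congr rfl fun i _ => hx i
  have hLB : ∫ x : (Fin (K * B) → P) × Λ,
        ‖c • (∑ i : Fin (K * B), g (x.1 i, x.2)) - gbar‖ ^ 2
        ∂((Measure.pi fun _ : Fin (K * B) => μ).prod ν)
      = c ^ 2 * (((K * B : ℕ) : ℝ) * 1 * V
          + ((K * B : ℕ) : ℝ) * (1 * (1 - 1)) * Vx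
          + 1 * (((K * B : ℕ) : ℝ) * (((K * B : ℕ) : ℝ) - 1)) * Vl) := by
    calc ∫ x : (Fin (K * B) → P) × Λ,
          ‖c • (∑ i : Fin (K * B), g (x.1 i, x.2)) - gbar‖ ^ 2
          ∂((Measure.pi fun _ : Fin (K * B) => μ).prod ν)
        = ∫ x : (Fin (K * B) → P) × Λ,
            ‖c • (∑ i : Fin (K * B), g' (x.1 i, x.2)) - gbar‖ ^ 2
          ∂((Measure.pi fun _ : Fin (K * B) => μ).prod ν) := by
          apply integral_congr_ae
          filter_upwards [haeL] with x hx
          rw [hx]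
      _ = ∫ y : (Fin (K * B) → P) × (Fin 1 → Λ),
            ‖c • (∑ i : Fin (K * B), g' (y.1 i, y.2 0)) - gbar‖ ^ 2
          ∂((Measure.pi fun _ : Fin (K * B) => μ).prod (Measure.pi fun _ : Fin 1 => ν)) :=
          (integral_comp_mp hρ hsmL.aestronglyMeasurable).symm
      _ = ∫ y : (Fin (K * B) → P) × (Fin 1 → Λ),
            c ^ 2 * ‖∑ i : Fin (K * B), ∑ k : Fin 1, f (y.1 i, y.2 k)‖ ^ 2
          ∂((Measure.pi fun _ : Fin (K * B) => μ).prod (Measure.pi fun _ : Fin 1 => ν)) := by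
          apply integral_congr_ae
          apply Eventually.of_forall
          intro y
          have h1 : ∑ i : Fin (K * B), g' (y.1 i, y.2 0)
              = ∑ i : Fin (K * B), ∑ k : Fin 1, g' (y.1 i, y.2 k) := by
            exact Finset.sum_congr rfl fun i _ => (Fin.sum_univ_one (f := fun k : Fin 1 => g' (y.1 i, y.2 k))).symm
          show ‖c • (∑ i : Fin (K * B), g' (y.1 i, y.2 0)) - gbar‖ ^ 2
            = c ^ 2 * ‖∑ i : Fin (K * B), ∑ k : Fin 1, f (y.1 i, y.2 k)‖ ^ 2
          rw [h1, smul_sum_sub c hc1' (fun i k => g' (y.1 i, y.2 k)) gbar, norm_smul,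
            mul_pow, Real.norm_eq_abs, sq_abs]
      _ = c ^ 2 * ∫ y : (Fin (K * B) → P) × (Fin 1 → Λ),
            ‖∑ i : Fin (K * B), ∑ k : Fin 1, f (y.1 i, y.2 k)‖ ^ 2
          ∂((Measure.pi fun _ : Fin (K * B) => μ).prod (Measure.pi fun _ : Fin 1 => ν)) :=
          integral_const_mul _ _
      _ = c ^ 2 * (((K * B : ℕ) : ℝ) * 1 * V
          + ((K * B : ℕ) : ℝ) * (1 * (1 - 1)) * Vx
          + 1 * (((K * B : ℕ) : ℝ) * (((K * B : ℕ) : ℝ) - 1)) * Vl) := by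
          rw [key_variance μ ν f hfm hf2 hf0, hVxf, hVlf]
          simp [Fintype.card_fin, hVdef]
  rw [hMM, hLB]
  -- final arithmetic
  have hVxle : Vx ≤ (B : ℝ) * Vl := by
    rw [div_le_iff₀ hVlpos] at hBlarge
    linarith
  have hKge : (1 : ℝ) ≤ (K : ℝ) := by exact_mod_cast hK.le
  have hBge : (1 : ℝ) ≤ (B : ℝ) := by exact_mod_cast hB
  have hc2 : (0 : ℝ) ≤ c ^ 2 := sq_nonneg c
  apply mul_le_mul_of_nonneg_left _ hc2
  push_cast
  have hmul : (B : ℝ) * ((K : ℝ) * ((K : ℝ) - 1)) * Vx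
      ≤ (B : ℝ) * ((K : ℝ) * ((K : ℝ) - 1)) * ((B : ℝ) * Vl) := by
    apply mul_le_mul_of_nonneg_left hVxle
    have : (0 : ℝ) ≤ (K : ℝ) - 1 := by linarith
    positivity
  nlinarith [hmul]
end
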